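/- Let A be an algebra over a field k of characteristic zero with a locally nilpotent derivation d. On A ⊗ k[x], define (a ⊗ f) ≺ (b ⊗ g) = ab ⊗ f·g' and (a ⊗ f) ≻ (b ⊗ g) = ab ⊗ f'·g, where ' denotes d/dx. Define φ : A → A ⊗ k[x] by φ(a) = Σ_{s≥0} d^s(a) ⊗ x^s/s!. Then φ(a·d(b)) = φ(a) ≺ φ(b) for all a, b ∈ A. -/
import Mathlib


open scoped TensorProduct
open Polynomial

private theorem iter_leibniz {k A : Type*} [Field k]
    [NonUnitalNonAssocRing A] [Module k A]
    (d : A →ₗ[k] A) (hd : ∀ a b : A, d (a * b) = d a * b + a * d b)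
    (n : ℕ) (p q : A) :
    (⇑d)^[n] (p * q) =
      ∑ i ∈ Finset.range (n + 1), n.choose i • ((⇑d)^[n - i] p * (⇑d)^[i] q) := by
  open Finset in
  induction n with
  | zero => simp [Finset.range]
  | succ n IH =>
    calc
      (⇑d)^[n + 1] (p * q) =
          d (∑ i ∈ range n.succ, n.choose i • ((⇑d)^[n - i] p * (⇑d)^[i] q)) := by
        rw [Function.iterate_succ_apply', IH]
      _ = (∑ i ∈ range n.succ,
            n.choose i • ((⇑d)^[n - i + 1] p * (⇑d)^[i] q)) +
          ∑ i ∈ range n.succ,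
            n.choose i • ((⇑d)^[n - i] p * (⇑d)^[i + 1] q) := by
        rw [map_sum]
        simp_rw [map_nsmul, hd, Function.iterate_succ_apply',
          smul_add, sum_add_distrib]
      _ = (∑ i ∈ range n.succ,
                n.choose i.succ • ((⇑d)^[n - i] p * (⇑d)^[i + 1] q)) +
              1 • ((⇑d)^[n + 1] p * (⇑d)^[0] q) +
            ∑ i ∈ range n.succ, n.choose i • ((⇑d)^[n - i] p * (⇑d)^[i + 1] q) := ?_
      _ = ((∑ i ∈ range n.succ, n.choose i • ((⇑d)^[n - i] p * (⇑d)^[i + 1] q)) +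
              ∑ i ∈ range n.succ,
                n.choose i.succ • ((⇑d)^[n - i] p * (⇑d)^[i + 1] q)) +
            1 • ((⇑d)^[n + 1] p * (⇑d)^[0] q) := by
        rw [add_comm, add_assoc]
      _ = (∑ i ∈ range n.succ,
              (n + 1).choose (i + 1) • ((⇑d)^[n + 1 - (i + 1)] p * (⇑d)^[i + 1] q)) +
            1 • ((⇑d)^[n + 1] p * (⇑d)^[0] q) := by
        simp_rw [Nat.choose_succ_succ, Nat.succ_sub_succ, add_smul, sum_add_distrib]
      _ = ∑ i ∈ range n.succ.succ,
            n.succ.choose i • ((⇑d)^[n.succ - i] p * (⇑d)^[i] q) := by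
        rw [sum_range_succ' _ n.succ, Nat.choose_zero_right, tsub_zero]
    congr
    refine (sum_range_succ' _ _).trans (congr_arg₂ (· + ·) ?_ ?_)
    · rw [sum_range_succ, Nat.choose_succ_self, zero_smul, add_zero]
      refine sum_congr rfl fun i hi => ?_
      rw [mem_range] at hi
      congr
      omega
    · rw [Nat.choose_zero_right, tsub_zero]

private theorem tri_sum {M : Type*} [AddCommMonoid M] (h : ℕ → ℕ → M) (N : ℕ) :
    ∑ s ∈ Finset.range N, ∑ i ∈ Finset.range (s + 1), h i (s - i) =
      ∑ i ∈ Finset.range N, ∑ t ∈ Finset.range (N - i), h i t := by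
  open Finset in
  induction N with
  | zero => simp
  | succ N IH =>
    rw [sum_range_succ, IH]
    have key : ∀ i ∈ range (N + 1), ∑ t ∈ range (N + 1 - i), h i t
        = (∑ t ∈ range (N - i), h i t) + (if i ≤ N then h i (N - i) else 0) := by
      intro i hi
      rw [mem_range] at hi
      rw [if_pos (by omega), show N + 1 - i = (N - i) + 1 by omega, sum_range_succ]
    rw [Finset.sum_congr rfl key, sum_add_distrib]
    congr 1
    · rw [sum_range_succ, show N - N = 0 from by omega, range_zero, sum_empty, add_zero]
    · refine sum_congr rfl fun i hi => ?_
      rw [mem_range] at hi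
      rw [if_pos (by omega)]

/-- For a locally nilpotent derivation `d`, the map
`φ(a) = Σ_s d^s(a) ⊗ x^s/s!` satisfies `φ(a·d(b)) = φ(a) ≺ φ(b)`, where
`(a ⊗ f) ≺ (b ⊗ g) = ab ⊗ f·g'`. -/
theorem phi_prec (k A : Type*) [Field k] [CharZero k]
    [NonUnitalNonAssocRing A] [Module k A] [SMulCommClass k A A]
    [IsScalarTower k A A]
    (d : A →ₗ[k] A) (hd : ∀ a b : A, d (a * b) = d a * b + a * d b)
    (hln : ∀ a : A, ∃ n : ℕ, (⇑d)^[n] a = 0)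
    (prec : A ⊗[k] k[X] →ₗ[k] A ⊗[k] k[X] →ₗ[k] A ⊗[k] k[X])
    (hprec : ∀ (a b : A) (f g : k[X]),
      prec (a ⊗ₜ f) (b ⊗ₜ g) = (a * b) ⊗ₜ (f * derivative g))
    (φ : A → A ⊗[k] k[X])
    (hφ : ∀ (a : A) (n : ℕ), (⇑d)^[n] a = 0 →
      φ a = ∑ s ∈ Finset.range n,
        ((⇑d)^[s] a) ⊗ₜ[k] ((s.factorial : k)⁻¹ • (X : k[X]) ^ s)) :
    ∀ a b : A, φ (a * d b) = prec (φ a) (φ b) := by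
  intro a b
  obtain ⟨n, hn⟩ := hln a
  obtain ⟨m, hm⟩ := hln b
  have hzero : ∀ j : ℕ, (⇑d)^[j] (0 : A) = 0 := fun j =>
    Function.iterate_fixed (map_zero d) j
  have ha : ∀ i, n ≤ i → (⇑d)^[i] a = 0 := by
    intro i hi
    rw [show i = (i - n) + n by omega, Function.iterate_add_apply, hn, hzero]
  have hb : ∀ j, m ≤ j → (⇑d)^[j] b = 0 := by
    intro j hj
    rw [show j = (j - m) + m by omega, Function.iterate_add_apply, hm, hzero]
  set N := n + m + 1 with hN
  set h : ℕ → ℕ → A ⊗[k] k[X] := fun i t =>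
    ((⇑d)^[i] a * (⇑d)^[t + 1] b) ⊗ₜ[k]
      (((i.factorial : k)⁻¹ * (t.factorial : k)⁻¹) • (X : k[X]) ^ (i + t)) with hh
  have hvan : ∀ i t : ℕ, n + m ≤ i + t + 1 → h i t = 0 := by
    intro i t hit
    rcases le_or_gt n i with h1 | h1
    · rw [hh]; dsimp only; rw [ha i h1, zero_mul, TensorProduct.zero_tmul]
    · rw [hh]; dsimp only; rw [hb (t + 1) (by omega), mul_zero, TensorProduct.zero_tmul]
  have habN : (⇑d)^[N] (a * d b) = 0 := by
    rw [iter_leibniz d hd N a (d b)]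
    refine Finset.sum_eq_zero fun i hi => ?_
    rw [Finset.mem_range] at hi
    rw [← Function.iterate_succ_apply (⇑d) i b]
    rcases le_or_gt n (N - i) with h1 | h1
    · rw [ha _ h1, zero_mul, smul_zero]
    · rw [hb (i + 1) (by omega), mul_zero, smul_zero]
  rw [hφ (a * d b) N habN, hφ a N (ha N (by omega)), hφ b N (hb N (by omega))]
  simp only [map_sum, LinearMap.sum_apply, hprec]
  have fact_ne : ∀ j : ℕ, ((j.factorial : k)) ≠ 0 := fun j =>
    Nat.cast_ne_zero.2 j.factorial_ne_zero
  have hL : ∀ s ∈ Finset.range N,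
      ((⇑d)^[s] (a * d b)) ⊗ₜ[k] ((s.factorial : k)⁻¹ • (X : k[X]) ^ s)
        = ∑ i ∈ Finset.range (s + 1), h i (s - i) := by
    intro s hs
    rw [iter_leibniz d hd s a (d b), TensorProduct.sum_tmul,
      ← Finset.sum_range_reflect]
    refine Finset.sum_congr rfl fun i hi => ?_
    rw [Finset.mem_range] at hi
    have his : i ≤ s := by omega
    simp only [Nat.add_sub_cancel]
    rw [Nat.sub_sub_self his, Nat.choose_symm his, hh]
    dsimp only
    rw [← Function.iterate_succ_apply (⇑d) (s - i) b,
      show i + (s - i) = s by omega,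
      ← Nat.cast_smul_eq_nsmul k, TensorProduct.smul_tmul, smul_smul]
    congr 1
    have e : ((s.choose i : ℕ) : k) * (i.factorial : k) * ((s - i).factorial : k)
        = (s.factorial : k) := by
      exact_mod_cast congrArg (Nat.cast : ℕ → k)
        (Nat.choose_mul_factorial_mul_factorial his)
    congr 1
    have f1 := fact_ne i
    have f2 := fact_ne (s - i)
    have f3 := fact_ne s
    field_simp
    linear_combination e
  have hR : ∀ i ∈ Finset.range N,
      (∑ j ∈ Finset.range N, ((⇑d)^[i] a * (⇑d)^[j] b) ⊗ₜ[k]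
          (((i.factorial : k)⁻¹ • (X : k[X]) ^ i) *
            derivative ((j.factorial : k)⁻¹ • (X : k[X]) ^ j)))
        = ∑ t ∈ Finset.range N, h i t := by
    intro i hi
    rw [hN, Finset.sum_range_succ']
    have h0 : ((⇑d)^[i] a * (⇑d)^[0] b) ⊗ₜ[k]
        (((i.factorial : k)⁻¹ • (X : k[X]) ^ i) *
          derivative ((Nat.factorial 0 : k)⁻¹ • (X : k[X]) ^ 0)) = 0 := by
      simp
    rw [h0, add_zero]
    have hterm : ∀ t : ℕ, ((⇑d)^[i] a * (⇑d)^[t + 1] b) ⊗ₜ[k]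
        (((i.factorial : k)⁻¹ • (X : k[X]) ^ i) *
          derivative (((t + 1).factorial : k)⁻¹ • (X : k[X]) ^ (t + 1))) = h i t := by
      intro t
      rw [hh]
      dsimp only
      congr 1
      rw [derivative_smul, derivative_X_pow]
      have hfac : (((t + 1).factorial : k))⁻¹ * ((t + 1 : ℕ) : k) = (t.factorial : k)⁻¹ := by
        have h1 : (((t + 1).factorial : k)) = ((t + 1 : ℕ) : k) * (t.factorial : k) := by
          push_cast [Nat.factorial_succ]
          ring
        have h2 : ((t + 1 : ℕ) : k) ≠ 0 := Nat.cast_ne_zero.2 (by omega)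
        rw [h1, mul_inv, mul_comm ((t + 1 : ℕ) : k)⁻¹, mul_assoc,
          inv_mul_cancel₀ h2, mul_one]
      rw [Nat.add_sub_cancel, ← smul_eq_C_mul, smul_smul, hfac,
        smul_mul_smul_comm, ← pow_add]
    calc ∑ t ∈ Finset.range (n + m), ((⇑d)^[i] a * (⇑d)^[t + 1] b) ⊗ₜ[k]
          (((i.factorial : k)⁻¹ • (X : k[X]) ^ i) *
            derivative (((t + 1).factorial : k)⁻¹ • (X : k[X]) ^ (t + 1)))
        = ∑ t ∈ Finset.range (n + m), h i t :=
          Finset.sum_congr rfl fun t _ => hterm t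
      _ = ∑ t ∈ Finset.range N, h i t := by
          refine Finset.sum_subset (Finset.range_subset_range.2 (by omega)) ?_
          intro t ht hnt
          rw [Finset.mem_range] at ht hnt
          exact hvan i t (by omega)
  calc ∑ s ∈ Finset.range N,
        ((⇑d)^[s] (a * d b)) ⊗ₜ[k] ((s.factorial : k)⁻¹ • (X : k[X]) ^ s)
      = ∑ s ∈ Finset.range N, ∑ i ∈ Finset.range (s + 1), h i (s - i) :=
        Finset.sum_congr rfl hL
    _ = ∑ i ∈ Finset.range N, ∑ t ∈ Finset.range (N - i), h i t := tri_sum h N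
    _ = ∑ i ∈ Finset.range N, ∑ t ∈ Finset.range N, h i t := by
        refine Finset.sum_congr rfl fun i hi => ?_
        rw [Finset.mem_range] at hi
        refine Finset.sum_subset (Finset.range_subset_range.2 (by omega)) ?_
        intro t ht hnt
        rw [Finset.mem_range] at ht hnt
        exact hvan i t (by omega)
    _ = _ := by
        conv_rhs => rw [Finset.sum_comm]
        exact (Finset.sum_congr rfl hR).symm
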